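/- The set G of n-qubit unitaries generated under multiplication by all Pauli X_i operators together with all diagonal gates Z_i, CZ_{ij}, and CCZ_{ijk} is a finite group (up to global phase), and its diagonal elements form exactly the set of operators of the form ∑_{x∈GF(2)^n} (-1)^{g(x)} |x⟩⟨x| with g a cubic polynomial over GF(2). In particular, conjugating any diagonal unitary U_g (g cubic) by a product of X operators yields X^a U_{g'} for some cubic g' with the same degree-3 part as g. -/
import Mathlib


open Finset

/-- A cubic polynomial over `GF(2)` with coefficients `A` (cubic), `B` (quadratic),
`C` (linear) and constant term `c₀`. -/
def cubicPoly (n : ℕ) (A : Fin n → Fin n → Fin n → ZMod 2) (B : Fin n → Fin n → ZMod 2)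
    (C : Fin n → ZMod 2) (c₀ : ZMod 2) : (Fin n → ZMod 2) → ZMod 2 :=
  fun x => (∑ i, ∑ j, ∑ k, A i j k * x i * x j * x k) +
    (∑ i, ∑ j, B i j * x i * x j) + (∑ i, C i * x i) + c₀

/-- Matrix of `X^b : |x⟩ ↦ |x + b⟩`; `X_i` is the case `b = e_i`. -/
def XPow (n : ℕ) (b : Fin n → ZMod 2) :
    Matrix (Fin n → ZMod 2) (Fin n → ZMod 2) ℂ :=
  fun x y => if y = x + b then 1 else 0

/-- The diagonal unitary `U_g = ∑_x (-1)^{g(x)} |x⟩⟨x|`. -/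
noncomputable def UDiag (n : ℕ) (g : (Fin n → ZMod 2) → ZMod 2) :
    Matrix (Fin n → ZMod 2) (Fin n → ZMod 2) ℂ :=
  Matrix.diagonal fun x => (-1 : ℂ) ^ (g x).val

/-- The generating gates: all `X_i`, `Z_i`, `CZ_{ij}` and `CCZ_{ijk}`. -/
noncomputable def gateGens (n : ℕ) :
    Set (Matrix (Fin n → ZMod 2) (Fin n → ZMod 2) ℂ) :=
  (Set.range fun i : Fin n => XPow n (Pi.single i 1)) ∪
  (Set.range fun i : Fin n => UDiag n fun x => x i) ∪
  {M | ∃ i j : Fin n, i ≠ j ∧ M = UDiag n fun x => x i * x j} ∪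
  {M | ∃ i j k : Fin n, i ≠ j ∧ j ≠ k ∧ i ≠ k ∧ M = UDiag n fun x => x i * x j * x k}

/-! ### auxiliary lemmas -/

lemma zmod2_cases : ∀ a : ZMod 2, a = 0 ∨ a = 1 := by decide

lemma neg_one_pow_add' (a b : ZMod 2) : ((-1:ℂ))^((a+b).val) = (-1)^a.val * (-1)^b.val := by
  rcases zmod2_cases a with h|h <;> rcases zmod2_cases b with h'|h' <;>
    simp [h, h', show ((1:ZMod 2)+1) = 0 by decide, show ZMod.val (1 : ZMod 2) = 1 by decide]

variable {n : ℕ}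

lemma UDiag_mul (g h : (Fin n → ZMod 2) → ZMod 2) :
    UDiag n g * UDiag n h = UDiag n (g + h) := by
  have e : (fun x => (-1:ℂ) ^ ((g + h) x).val) = fun x => (-1:ℂ)^(g x).val * (-1)^(h x).val := by
    funext x; exact neg_one_pow_add' (g x) (h x)
  rw [UDiag, UDiag, UDiag, Matrix.diagonal_mul_diagonal, e]

lemma UDiag_zero : UDiag n 0 = 1 := by
  simp [UDiag]

lemma XPow_mul (b c : Fin n → ZMod 2) : XPow n b * XPow n c = XPow n (b + c) := by
  ext x y
  simp only [Matrix.mul_apply, XPow, ite_mul, one_mul, zero_mul]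
  rw [Finset.sum_ite_eq' Finset.univ (x + b) (fun z => if y = z + c then (1:ℂ) else 0)]
  simp [add_assoc]

lemma XPow_zero : XPow n 0 = 1 := by
  ext x y
  simp [XPow, Matrix.one_apply, eq_comm]

lemma XPow_mul_UDiag (b : Fin n → ZMod 2) (g : (Fin n → ZMod 2) → ZMod 2) :
    XPow n b * UDiag n g = UDiag n (fun x => g (x + b)) * XPow n b := by
  ext x y
  rw [UDiag, UDiag, Matrix.mul_diagonal, Matrix.diagonal_mul]
  simp only [XPow]
  by_cases h : y = x + b
  · subst h; simp
  · simp [h]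

lemma XPow_conj (b : Fin n → ZMod 2) (g : (Fin n → ZMod 2) → ZMod 2) :
    XPow n b * UDiag n g * XPow n b = UDiag n (fun x => g (x + b)) := by
  rw [XPow_mul_UDiag, mul_assoc, XPow_mul]
  have : b + b = 0 := by funext i; simp [CharTwo.add_self_eq_zero]
  rw [this, XPow_zero, mul_one]

/-! ### polynomial sets -/

def Quad (n : ℕ) : Set ((Fin n → ZMod 2) → ZMod 2) :=
  {f | ∃ B C c₀, f = cubicPoly n 0 B C c₀}

def CubicW (n : ℕ) (A : Fin n → Fin n → Fin n → ZMod 2) : Set ((Fin n → ZMod 2) → ZMod 2) :=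
  {f | ∃ B C c₀, f = cubicPoly n A B C c₀}

lemma cubicPoly_add (A A' B B' C C' c c') :
    cubicPoly n A B C c + cubicPoly n A' B' C' c' = cubicPoly n (A+A') (B+B') (C+C') (c+c') := by
  funext x
  simp only [Pi.add_apply, cubicPoly, add_mul, Finset.sum_add_distrib]
  ring

lemma cubicW_add {A A' f g} (hf : f ∈ CubicW n A) (hg : g ∈ CubicW n A') :
    f + g ∈ CubicW n (A + A') := by
  obtain ⟨B,C,c,rfl⟩ := hf; obtain ⟨B',C',c',rfl⟩ := hg
  exact ⟨B+B', C+C', c+c', cubicPoly_add ..⟩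

lemma quad_add {f g} (hf : f ∈ Quad n) (hg : g ∈ Quad n) : f + g ∈ Quad n := by
  have := cubicW_add (A := (0 : Fin n → Fin n → Fin n → ZMod 2)) (A' := 0) hf hg
  simpa [CubicW, Quad] using this

lemma quad_zero : (0 : (Fin n → ZMod 2) → ZMod 2) ∈ Quad n :=
  ⟨0, 0, 0, by funext x; simp [cubicPoly]⟩

lemma quad_const (c : ZMod 2) : (fun _ : Fin n → ZMod 2 => c) ∈ Quad n :=
  ⟨0, 0, c, by funext x; simp [cubicPoly]⟩

lemma quad_sum {ι : Type*} (s : Finset ι) (f : ι → (Fin n → ZMod 2) → ZMod 2)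
    (h : ∀ i ∈ s, f i ∈ Quad n) : (fun x => ∑ i ∈ s, f i x) ∈ Quad n := by
  have e : (fun x => ∑ i ∈ s, f i x) = ∑ i ∈ s, f i := by funext x; simp
  rw [e]
  exact Finset.sum_induction f (· ∈ Quad n) (fun a b ha hb => quad_add ha hb) quad_zero h

lemma quad_smul {f} (a : ZMod 2) (hf : f ∈ Quad n) : (fun x => a * f x) ∈ Quad n := by
  rcases zmod2_cases a with h|h <;> subst h
  · simpa using quad_const (n := n) 0
  · simpa using hf

lemma quad_lin (i : Fin n) : (fun x : Fin n → ZMod 2 => x i) ∈ Quad n :=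
  ⟨0, Pi.single i 1, 0, by
    funext x
    simp [cubicPoly, Pi.single_apply]⟩

lemma quad_mono2 (i j : Fin n) : (fun x : Fin n → ZMod 2 => x i * x j) ∈ Quad n :=
  ⟨fun a b => (if a = i then 1 else 0) * (if b = j then 1 else 0), 0, 0, by
    funext x
    simp [cubicPoly, ite_mul, mul_ite, zero_mul, mul_zero]⟩

lemma cubic_mono3 (i j k : Fin n) :
    ∃ A, (fun x : Fin n → ZMod 2 => x i * x j * x k) ∈ CubicW n A :=
  ⟨fun a b c => (if a = i then 1 else 0) * ((if b = j then 1 else 0) * (if c = k then 1 else 0)),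
   0, 0, 0, by
    funext x
    simp [cubicPoly, ite_mul, mul_ite, zero_mul, mul_zero, mul_assoc]⟩

lemma cube_expand : ∀ u v w p q r : ZMod 2,
    (u+p)*(v+q)*(w+r) + u*v*w =
      p*(v*w) + q*(u*w) + r*(u*v) + (p*q)*w + (p*r)*v + (q*r)*u + p*(q*r) := by decide

lemma quad_cube_term (b : Fin n → ZMod 2) (i j k : Fin n) :
    (fun x : Fin n → ZMod 2 =>
      (x i + b i)*(x j + b j)*(x k + b k) + x i * x j * x k) ∈ Quad n := by
  have e : (fun x : Fin n → ZMod 2 =>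
      (x i + b i)*(x j + b j)*(x k + b k) + x i * x j * x k)
      = fun x => b i * (x j * x k) + b j * (x i * x k) + b k * (x i * x j)
        + (b i * b j) * x k + (b i * b k) * x j + (b j * b k) * x i + (fun _ => b i * (b j * b k)) x := by
    funext x; exact cube_expand ..
  rw [e]
  exact quad_add (quad_add (quad_add (quad_add (quad_add (quad_add
    (quad_smul _ (quad_mono2 j k)) (quad_smul _ (quad_mono2 i k))) (quad_smul _ (quad_mono2 i j)))
    (quad_smul _ (quad_lin k))) (quad_smul _ (quad_lin j))) (quad_smul _ (quad_lin i)))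
    (quad_const _)

lemma quad_sq_term (b : Fin n → ZMod 2) (i j : Fin n) :
    (fun x : Fin n → ZMod 2 => (x i + b i)*(x j + b j)) ∈ Quad n := by
  have e : (fun x : Fin n → ZMod 2 => (x i + b i)*(x j + b j))
      = fun x => x i * x j + b i * x j + b j * x i + (fun _ => b i * b j) x := by
    funext x; ring
  rw [e]
  exact quad_add (quad_add (quad_add (quad_mono2 i j) (quad_smul _ (quad_lin j)))
    (quad_smul _ (quad_lin i))) (quad_const _)

lemma quad_lin_term (b : Fin n → ZMod 2) (i : Fin n) :
    (fun x : Fin n → ZMod 2 => x i + b i) ∈ Quad n :=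
  quad_add (quad_lin i) (quad_const _)

lemma cubicW_shift {A : Fin n → Fin n → Fin n → ZMod 2} {f} (hf : f ∈ CubicW n A)
    (b : Fin n → ZMod 2) : (fun x => f (x + b)) ∈ CubicW n A := by
  obtain ⟨B, C, c, rfl⟩ := hf
  set q : (Fin n → ZMod 2) → ZMod 2 :=
    fun x => cubicPoly n A B C c (x + b) + cubicPoly n A 0 0 0 x with hqdef
  have hq : q ∈ Quad n := by
    have key : q = (fun x => ∑ i, ∑ j, ∑ k,
          A i j k * ((x i + b i)*(x j + b j)*(x k + b k) + x i * x j * x k))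
        + ((fun x => ∑ i, ∑ j, B i j * ((x i + b i)*(x j + b j)))
        + ((fun x => ∑ i, C i * (x i + b i)) + (fun _ => c))) := by
      funext x
      simp only [hqdef, Pi.add_apply, cubicPoly, Pi.zero_apply, zero_mul, Finset.sum_const_zero,
        add_zero]
      have c1 : ∑ i, ∑ j, ∑ k, A i j k * (x i + b i) * (x j + b j) * (x k + b k)
          = ∑ i, ∑ j, ∑ k, A i j k * ((x i + b i)*(x j + b j)*(x k + b k)) := by
        refine Finset.sum_congr rfl fun i _ => Finset.sum_congr rfl fun j _ =>
          Finset.sum_congr rfl fun k _ => by ring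
      have c2 : ∑ i, ∑ j, ∑ k, A i j k * x i * x j * x k
          = ∑ i, ∑ j, ∑ k, A i j k * (x i * x j * x k) := by
        refine Finset.sum_congr rfl fun i _ => Finset.sum_congr rfl fun j _ =>
          Finset.sum_congr rfl fun k _ => by ring
      have c3 : ∑ i, ∑ j, B i j * (x i + b i) * (x j + b j)
          = ∑ i, ∑ j, B i j * ((x i + b i)*(x j + b j)) := by
        refine Finset.sum_congr rfl fun i _ => Finset.sum_congr rfl fun j _ => by ring
      have e3 : ∑ i, ∑ j, ∑ k,
            A i j k * ((x i + b i)*(x j + b j)*(x k + b k) + x i * x j * x k)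
          = (∑ i, ∑ j, ∑ k, A i j k * ((x i + b i)*(x j + b j)*(x k + b k)))
            + ∑ i, ∑ j, ∑ k, A i j k * (x i * x j * x k) := by
        simp [mul_add, Finset.sum_add_distrib]
      rw [c1, c2, c3, e3]
      ring
    rw [key]
    refine quad_add ?_ (quad_add ?_ (quad_add ?_ (quad_const _)))
    · exact quad_sum _ _ fun i _ => quad_sum _ _ fun j _ => quad_sum _ _ fun k _ =>
        quad_smul _ (quad_cube_term b i j k)
    · exact quad_sum _ _ fun i _ => quad_sum _ _ fun j _ => quad_smul _ (quad_sq_term b i j)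
    · exact quad_sum _ _ fun i _ => quad_smul _ (quad_lin_term b i)
  obtain ⟨Bq, Cq, cq, hq'⟩ := hq
  have e : (fun x => cubicPoly n A B C c (x + b)) = cubicPoly n A 0 0 0 + cubicPoly n 0 Bq Cq cq := by
    rw [← hq']
    funext x
    simp only [Pi.add_apply, hqdef]
    have : ∀ u v : ZMod 2, v + (u + v) = u := by decide
    exact (this _ _).symm
  rw [cubicPoly_add] at e
  simp only [add_zero, zero_add] at e
  exact ⟨_, _, _, e⟩

/-! ### normal form -/

def NFset (n : ℕ) : Set (Matrix (Fin n → ZMod 2) (Fin n → ZMod 2) ℂ) :=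
  {M | ∃ A B C c b, M = UDiag n (cubicPoly n A B C c) * XPow n b}

lemma cubicPoly_zero : cubicPoly n 0 0 0 0 = 0 := by
  funext x; simp [cubicPoly]

lemma NF_one : (1 : Matrix (Fin n → ZMod 2) (Fin n → ZMod 2) ℂ) ∈ NFset n :=
  ⟨0, 0, 0, 0, 0, by rw [cubicPoly_zero, UDiag_zero, XPow_zero, one_mul]⟩

lemma NF_mul {M N : Matrix (Fin n → ZMod 2) (Fin n → ZMod 2) ℂ}
    (hM : M ∈ NFset n) (hN : N ∈ NFset n) : M * N ∈ NFset n := by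
  obtain ⟨A, B, C, c, b, rfl⟩ := hM
  obtain ⟨A', B', C', c', b', rfl⟩ := hN
  obtain ⟨B3, C3, c3, h3⟩ :=
    cubicW_add (⟨B, C, c, rfl⟩ : cubicPoly n A B C c ∈ CubicW n A)
      (cubicW_shift (⟨B', C', c', rfl⟩ : cubicPoly n A' B' C' c' ∈ CubicW n A') b)
  refine ⟨A + A', B3, C3, c3, b + b', ?_⟩
  calc UDiag n (cubicPoly n A B C c) * XPow n b * (UDiag n (cubicPoly n A' B' C' c') * XPow n b')
      = UDiag n (cubicPoly n A B C c) * (XPow n b * UDiag n (cubicPoly n A' B' C' c')) * XPow n b' := by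
        simp only [mul_assoc]
    _ = UDiag n (cubicPoly n A B C c) *
          (UDiag n (fun x => cubicPoly n A' B' C' c' (x + b)) * XPow n b) * XPow n b' := by
        rw [XPow_mul_UDiag]
    _ = (UDiag n (cubicPoly n A B C c) * UDiag n (fun x => cubicPoly n A' B' C' c' (x + b)))
          * (XPow n b * XPow n b') := by simp only [mul_assoc]
    _ = UDiag n (cubicPoly n (A + A') B3 C3 c3) * XPow n (b + b') := by
        rw [UDiag_mul, XPow_mul, h3]

noncomputable def NFmonoid (n : ℕ) : Submonoid (Matrix (Fin n → ZMod 2) (Fin n → ZMod 2) ℂ) where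
  carrier := NFset n
  one_mem' := NF_one
  mul_mem' := NF_mul

lemma gens_sub_NF : gateGens n ⊆ NFset n := by
  rintro M (((⟨i, rfl⟩ | ⟨i, rfl⟩) | ⟨i, j, hij, rfl⟩) | ⟨i, j, k, hij, hjk, hik, rfl⟩)
  · exact ⟨0, 0, 0, 0, Pi.single i 1, by rw [cubicPoly_zero, UDiag_zero, one_mul]⟩
  · obtain ⟨B, C, c, h⟩ := quad_lin i
    exact ⟨0, B, C, c, 0, by rw [XPow_zero, mul_one, ← h]⟩
  · obtain ⟨B, C, c, h⟩ := quad_mono2 i j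
    exact ⟨0, B, C, c, 0, by rw [XPow_zero, mul_one, ← h]⟩
  · obtain ⟨A, B, C, c, h⟩ := cubic_mono3 i j k
    exact ⟨A, B, C, c, 0, by rw [XPow_zero, mul_one, ← h]⟩

lemma closure_sub_NF : (Submonoid.closure (gateGens n) : Set _) ⊆ NFset n :=
  Submonoid.closure_le (S := NFmonoid n) |>.mpr gens_sub_NF

/-! ### generators in the closure -/

lemma mem_cl_X (i : Fin n) : XPow n (Pi.single i 1) ∈ Submonoid.closure (gateGens n) :=
  Submonoid.subset_closure (Or.inl (Or.inl (Or.inl ⟨i, rfl⟩)))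

lemma mem_cl_Z (i : Fin n) : UDiag n (fun x => x i) ∈ Submonoid.closure (gateGens n) :=
  Submonoid.subset_closure (Or.inl (Or.inl (Or.inr ⟨i, rfl⟩)))

lemma mem_cl_add {g h : (Fin n → ZMod 2) → ZMod 2}
    (hg : UDiag n g ∈ Submonoid.closure (gateGens n))
    (hh : UDiag n h ∈ Submonoid.closure (gateGens n)) :
    UDiag n (fun x => g x + h x) ∈ Submonoid.closure (gateGens n) := by
  have := mul_mem hg hh
  rwa [UDiag_mul] at this

lemma mem_cl_sum {ι : Type*} (s : Finset ι) (f : ι → (Fin n → ZMod 2) → ZMod 2)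
    (h : ∀ i ∈ s, UDiag n (f i) ∈ Submonoid.closure (gateGens n)) :
    UDiag n (fun x => ∑ i ∈ s, f i x) ∈ Submonoid.closure (gateGens n) := by
  have e : (fun x => ∑ i ∈ s, f i x) = ∑ i ∈ s, f i := by funext x; simp
  rw [e]
  refine Finset.sum_induction f (fun g => UDiag n g ∈ Submonoid.closure (gateGens n))
    (fun a b ha hb => ?_) (by show UDiag n 0 ∈ _; rw [UDiag_zero]; exact one_mem _) h
  have := mul_mem ha hb
  rwa [UDiag_mul] at this

lemma mem_cl_one (hn : 1 ≤ n) :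
    UDiag n (fun _ => (1 : ZMod 2)) ∈ Submonoid.closure (gateGens n) := by
  set i0 : Fin n := ⟨0, hn⟩
  have hx := mem_cl_X i0
  have hz := mem_cl_Z i0
  have key : XPow n (Pi.single i0 1) * UDiag n (fun x => x i0) * XPow n (Pi.single i0 1)
      = UDiag n (fun x => x i0 + 1) := by
    rw [XPow_conj]
    refine congrArg (UDiag n) ?_
    funext x
    simp [Pi.single_eq_same]
  have h1 : UDiag n (fun x => x i0 + 1) ∈ Submonoid.closure (gateGens n) :=
    key ▸ mul_mem (mul_mem hx hz) hx
  have h2 := mem_cl_add h1 hz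
  have e : (fun x : Fin n → ZMod 2 => (x i0 + 1) + x i0) = fun _ => (1 : ZMod 2) := by
    funext x
    have : ∀ a : ZMod 2, a + 1 + a = 1 := by decide
    exact this _
  rwa [e] at h2

lemma mem_cl_const (hn : 1 ≤ n) (c : ZMod 2) :
    UDiag n (fun _ => c) ∈ Submonoid.closure (gateGens n) := by
  rcases zmod2_cases c with h|h <;> subst h
  · have e : (fun _ : Fin n → ZMod 2 => (0:ZMod 2)) = 0 := rfl
    rw [e, UDiag_zero]; exact one_mem _
  · exact mem_cl_one hn

lemma mem_cl_smul {g : (Fin n → ZMod 2) → ZMod 2} (a : ZMod 2)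
    (hg : UDiag n g ∈ Submonoid.closure (gateGens n)) :
    UDiag n (fun x => a * g x) ∈ Submonoid.closure (gateGens n) := by
  rcases zmod2_cases a with h|h <;> subst h
  · have e : (fun x => (0:ZMod 2) * g x) = 0 := by funext x; simp
    rw [e, UDiag_zero]; exact one_mem _
  · have e : (fun x => (1:ZMod 2) * g x) = g := by funext x; simp
    rw [e]; exact hg

lemma mem_cl_mono2 (i j : Fin n) :
    UDiag n (fun x => x i * x j) ∈ Submonoid.closure (gateGens n) := by
  by_cases h : i = j
  · subst h
    have e : (fun x : Fin n → ZMod 2 => x i * x i) = fun x => x i := by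
      funext x
      have : ∀ a : ZMod 2, a * a = a := by decide
      exact this _
    rw [e]; exact mem_cl_Z i
  · exact Submonoid.subset_closure (Or.inl (Or.inr ⟨i, j, h, rfl⟩))

lemma mem_cl_mono3 (i j k : Fin n) :
    UDiag n (fun x => x i * x j * x k) ∈ Submonoid.closure (gateGens n) := by
  by_cases hij : i = j
  · subst hij
    have e : (fun x : Fin n → ZMod 2 => x i * x i * x k) = fun x => x i * x k := by
      funext x
      have : ∀ a b : ZMod 2, a * a * b = a * b := by decide
      exact this _ _
    rw [e]; exact mem_cl_mono2 i k
  by_cases hjk : j = k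
  · subst hjk
    have e : (fun x : Fin n → ZMod 2 => x i * x j * x j) = fun x => x i * x j := by
      funext x
      have : ∀ a b : ZMod 2, a * b * b = a * b := by decide
      exact this _ _
    rw [e]; exact mem_cl_mono2 i j
  by_cases hik : i = k
  · subst hik
    have e : (fun x : Fin n → ZMod 2 => x i * x j * x i) = fun x => x i * x j := by
      funext x
      have : ∀ a b : ZMod 2, a * b * a = a * b := by decide
      exact this _ _
    rw [e]; exact mem_cl_mono2 i j
  · exact Submonoid.subset_closure (Or.inr ⟨i, j, k, hij, hjk, hik, rfl⟩)

lemma mem_cl_cubic (hn : 1 ≤ n) (A B C c) :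
    UDiag n (cubicPoly n A B C c) ∈ Submonoid.closure (gateGens n) := by
  have h1 : UDiag n (fun x => ∑ i, ∑ j, ∑ k, A i j k * x i * x j * x k)
      ∈ Submonoid.closure (gateGens n) := by
    refine mem_cl_sum _ _ fun i _ => mem_cl_sum _ _ fun j _ => mem_cl_sum _ _ fun k _ => ?_
    have e : (fun x : Fin n → ZMod 2 => A i j k * x i * x j * x k)
        = fun x => A i j k * (x i * x j * x k) := by funext x; ring
    rw [e]; exact mem_cl_smul _ (mem_cl_mono3 i j k)
  have h2 : UDiag n (fun x => ∑ i, ∑ j, B i j * x i * x j)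
      ∈ Submonoid.closure (gateGens n) := by
    refine mem_cl_sum _ _ fun i _ => mem_cl_sum _ _ fun j _ => ?_
    have e : (fun x : Fin n → ZMod 2 => B i j * x i * x j)
        = fun x => B i j * (x i * x j) := by funext x; ring
    rw [e]; exact mem_cl_smul _ (mem_cl_mono2 i j)
  have h3 : UDiag n (fun x => ∑ i, C i * x i) ∈ Submonoid.closure (gateGens n) :=
    mem_cl_sum _ _ fun i _ => mem_cl_smul _ (mem_cl_Z i)
  have h4 := mem_cl_const hn c
  exact mem_cl_add (mem_cl_add (mem_cl_add h1 h2) h3) h4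

/-- The group generated by the `X_i`, `Z_i`, `CZ_{ij}`, `CCZ_{ijk}` gates is finite
(global phases being only `±1`), its diagonal elements are exactly the operators
`∑_x (-1)^{g(x)}|x⟩⟨x|` with `g` a cubic polynomial over `GF(2)`, and conjugating a
cubic diagonal unitary by a product of `X` operators yields a cubic diagonal unitary
with the same degree-3 part. -/
theorem gate_group_finite_diagonal_cubic (n : ℕ) (hn : 1 ≤ n) :
    (Submonoid.closure (gateGens n) : Set (Matrix (Fin n → ZMod 2) (Fin n → ZMod 2) ℂ)).Finite ∧
    (∀ A B C c₀, UDiag n (cubicPoly n A B C c₀) ∈ Submonoid.closure (gateGens n)) ∧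
    (∀ M ∈ Submonoid.closure (gateGens n),
      (M.IsDiag ↔ ∃ A B C c₀, M = UDiag n (cubicPoly n A B C c₀))) ∧
    (∀ (b : Fin n → ZMod 2) A B C c₀, ∃ B' C' c₀',
      XPow n b * UDiag n (cubicPoly n A B C c₀) * XPow n b
        = UDiag n (cubicPoly n A B' C' c₀')) := by
  refine ⟨?_, ?_, ?_, ?_⟩
  · have hsub : (Submonoid.closure (gateGens n) : Set _) ⊆
        Set.range (fun p : ((Fin n → ZMod 2) → ZMod 2) × (Fin n → ZMod 2) =>
          UDiag n p.1 * XPow n p.2) := by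
      intro M hM
      obtain ⟨A, B, C, c, b, rfl⟩ := closure_sub_NF hM
      exact ⟨(cubicPoly n A B C c, b), rfl⟩
    exact Set.Finite.subset (Set.finite_range _) hsub
  · intro A B C c₀
    exact mem_cl_cubic hn A B C c₀
  · intro M hM
    constructor
    · intro hd
      obtain ⟨A, B, C, c, b, rfl⟩ := closure_sub_NF hM
      have hb : b = 0 := by
        by_contra hb
        have hne : (0 : Fin n → ZMod 2) ≠ b := fun h => hb h.symm
        have h0 := hd hne
        rw [UDiag, Matrix.diagonal_mul] at h0
        have h1 : ((-1:ℂ)) ^ (cubicPoly n A B C c 0).val = 0 := by simpa [XPow] using h0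
        exact pow_ne_zero _ (by norm_num : (-1:ℂ) ≠ 0) h1
      subst hb
      rw [XPow_zero, mul_one]
      exact ⟨A, B, C, c, rfl⟩
    · rintro ⟨A, B, C, c, rfl⟩
      exact Matrix.isDiag_diagonal _
  · intro b A B C c₀
    obtain ⟨B', C', c', he⟩ :=
      cubicW_shift (⟨B, C, c₀, rfl⟩ : cubicPoly n A B C c₀ ∈ CubicW n A) b
    exact ⟨B', C', c', by rw [XPow_conj, he]⟩
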